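/- Let b ≥ 1 be an integer, κ > −1 a real number, and let λ_1,…,λ_b be pairwise distinct complex numbers with λ_1 = 1+κ such that each λ_j satisfies the indicial equation λ_j(λ_j+1)⋯(λ_j+b−1) = (1+κ)(2+κ)⋯(b+κ), with Re λ_j < 1+κ for 2 ≤ j ≤ b, and with ∑_{k=0}^{b−1} 1/(λ_j+k) ≠ 0 for every j. Fix an integer m with 1 ≤ m ≤ b, and for each n ≥ 1 set P_n(m) = ∑_{j=1}^{b} [C(λ_j+n−2, n−1)·C(λ_j+b−1, b−m)·C(m−1+κ, m−1)] / [C(n−1+κ, n−1)·C(b, m−1)·(b−m+1)·C(b+κ, b)·∑_{k=0}^{b−1} 1/(λ_j+k)]. Then, as n → ∞, P_n(m) converges to C(b+κ, b−m)·C(m−1+κ, m−1) / [C(b, m−1)·(b−m+1)·C(b+κ, b)·∑_{k=1}^{b} 1/(κ+k)]. (For κ = 1/(d−1) this is the convergence of the probability mass function of the initial bucket size K_n in (b,d)-ary increasing trees to its discrete limit law, and for κ = −1/(α+1) the same for (b,α)-plane oriented recursive trees.) -/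

import Mathlib

open Filter

/-- The generalized binomial coefficient `C(x, n) = x(x-1)⋯(x-n+1)/n!` over `ℂ`. -/
noncomputable def genBinomC (x : ℂ) (n : ℕ) : ℂ :=
    (∏ i ∈ Finset.range n, (x - i)) / (n.factorial : ℂ)

open Topology

section Aux
open Finset Topology

lemma prod_ratio_tendsto_zero {μ : ℝ} (hμ : 0 < μ) {z : ℂ} (hz : z.re < μ) :
    Tendsto (fun n : ℕ => (∏ k ∈ Finset.range n, (z + k)) / ∏ k ∈ Finset.range n, ((μ:ℂ) + k))
      atTop (𝓝 0) := by
  by_cases h : ∃ k : ℕ, z + k = 0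
  · obtain ⟨k, hk⟩ := h
    refine Tendsto.congr' ?_ (tendsto_const_nhds (x := (0:ℂ)))
    filter_upwards [eventually_ge_atTop (k+1)] with n hn
    rw [Finset.prod_eq_zero (Finset.mem_range.mpr (by omega)) hk, zero_div]
  · push_neg at h
    have hzne : ∀ k : ℕ, z ≠ -k := fun k hk => h k (by rw [hk]; ring)
    have hΓ : Complex.Gamma z ≠ 0 := Complex.Gamma_ne_zero hzne
    have hμne : ∀ k : ℕ, (μ:ℂ) + k ≠ 0 := by
      intro k
      have h0 : ((μ + k : ℝ) : ℂ) ≠ 0 := by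
        exact_mod_cast (by positivity : (0:ℝ) < μ + k).ne'
      simpa using h0
    have key : ∀ n : ℕ, 1 ≤ n →
        (∏ k ∈ Finset.range (n+1), (z + k)) / (∏ k ∈ Finset.range (n+1), ((μ:ℂ) + k))
          = (n:ℂ) ^ (z - (μ:ℂ)) * (Complex.GammaSeq (μ:ℂ) n / Complex.GammaSeq z n) := by
      intro n hn
      have hn0 : (n:ℂ) ≠ 0 := Nat.cast_ne_zero.mpr (by omega)
      have hPz : (∏ k ∈ Finset.range (n+1), (z + k)) ≠ 0 :=
        Finset.prod_ne_zero_iff.mpr fun k _ => h k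
      have hPμ : (∏ k ∈ Finset.range (n+1), ((μ:ℂ) + k)) ≠ 0 :=
        Finset.prod_ne_zero_iff.mpr fun k _ => hμne k
      have hnz : (n:ℂ) ^ z ≠ 0 := by
        intro hc
        have h1 := Complex.norm_natCast_cpow_of_pos (by omega : 0 < n) z
        rw [hc] at h1
        have h2 : (0:ℝ) < (n:ℝ) ^ z.re := Real.rpow_pos_of_pos (by positivity) _
        simp at h1; linarith
      have hnμ : (n:ℂ) ^ (μ:ℂ) ≠ 0 := by
        intro hc
        have h1 := Complex.norm_natCast_cpow_of_pos (by omega : 0 < n) (μ:ℂ)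
        rw [hc] at h1
        have h2 : (0:ℝ) < (n:ℝ) ^ μ := Real.rpow_pos_of_pos (by positivity) _
        simp at h1; linarith
      have hfac : (n.factorial : ℂ) ≠ 0 := Nat.cast_ne_zero.mpr n.factorial_ne_zero
      rw [Complex.GammaSeq, Complex.GammaSeq, Complex.cpow_sub _ _ hn0]
      field_simp
    have h1 : Tendsto (fun n : ℕ => (n:ℂ) ^ (z - (μ:ℂ))) atTop (𝓝 0) := by
      rw [tendsto_zero_iff_norm_tendsto_zero]
      have hre : (z - (μ:ℂ)).re < 0 := by
        simp only [Complex.sub_re, Complex.ofReal_re]; linarith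
      have h2 : Tendsto (fun x : ℝ => x ^ ((z - (μ:ℂ)).re)) atTop (𝓝 0) := by
        have := tendsto_rpow_neg_atTop (y := -(z - (μ:ℂ)).re) (by linarith)
        simpa using this
      refine Tendsto.congr' ?_ (h2.comp tendsto_natCast_atTop_atTop)
      filter_upwards [eventually_ge_atTop 1] with n hn
      exact (Complex.norm_natCast_cpow_of_pos (by omega) _).symm
    have h2 := (Complex.GammaSeq_tendsto_Gamma (μ:ℂ)).div (Complex.GammaSeq_tendsto_Gamma z) hΓ
    have h3 := h1.mul h2
    rw [zero_mul] at h3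
    have h4 : Tendsto (fun n : ℕ =>
        (∏ k ∈ Finset.range (n+1), (z + k)) / (∏ k ∈ Finset.range (n+1), ((μ:ℂ) + k)))
        atTop (𝓝 0) := by
      refine Tendsto.congr' ?_ h3
      filter_upwards [eventually_ge_atTop 1] with n hn
      exact (key n hn).symm
    exact (tendsto_add_atTop_iff_nat 1).mp h4

lemma prod_reflect (w : ℂ) (n : ℕ) :
    ∏ i ∈ Finset.range n, (w + (n:ℂ) - 1 - i) = ∏ i ∈ Finset.range n, (w + i) := by
  rw [← Finset.prod_range_reflect (fun j => w + (j:ℂ)) n]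
  refine Finset.prod_congr rfl fun i hi => ?_
  rw [Finset.mem_range] at hi
  have h1 : ((n - 1 - i : ℕ) : ℂ) = (n:ℂ) - 1 - i := by
    rw [Nat.sub_sub, Nat.cast_sub (by omega)]
    push_cast; ring
  rw [h1]; ring

lemma genBinom_shift (w : ℂ) (n : ℕ) :
    genBinomC (w + (n:ℂ) - 1) n = (∏ k ∈ Finset.range n, (w + k)) / (n.factorial : ℂ) := by
  rw [genBinomC, ← prod_reflect w n]

lemma genBinom_kappa (κ : ℂ) (n : ℕ) :
    genBinomC ((n:ℂ) + κ) n = (∏ k ∈ Finset.range n, (1 + κ + k)) / (n.factorial : ℂ) := by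
  rw [genBinomC]
  congr 1
  calc ∏ i ∈ Finset.range n, ((n:ℂ) + κ - i)
      = ∏ i ∈ Finset.range n, ((1 + κ) + (n:ℂ) - 1 - i) :=
        Finset.prod_congr rfl fun i _ => by ring
    _ = ∏ i ∈ Finset.range n, ((1 + κ) + (i:ℂ)) := prod_reflect _ _
    _ = ∏ i ∈ Finset.range n, (1 + κ + (i:ℂ)) := rfl

lemma div_shape (P Q A B f : ℂ) (hf : f ≠ 0) :
    (P / f * A) / (Q / f * B) = P / Q * (A / B) := by
  rcases eq_or_ne Q 0 with rfl | hQ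
  · simp
  rcases eq_or_ne B 0 with rfl | hB
  · simp
  field_simp

end Aux

/-- Let `b ≥ 1`, `κ > -1`, and let `λ_1, …, λ_b` be pairwise distinct complex numbers with
`λ_1 = 1+κ`, each satisfying the indicial equation `λ_j(λ_j+1)⋯(λ_j+b-1) = (1+κ)(2+κ)⋯(b+κ)`,
with `Re λ_j < 1+κ` for `j ≥ 2`, and `∑_{k=0}^{b-1} 1/(λ_j+k) ≠ 0`.  For `1 ≤ m ≤ b`, the
quantity `P_n(m)` (the probability mass function of the initial bucket size `K_n`, written here
with `n` replaced by `n+1` so as to index by `n ∈ ℕ`) converges, as `n → ∞`, to the stated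
discrete limit law. -/
theorem initial_bucket_size_limit_law (b : ℕ) (hb : 1 ≤ b) (κ : ℝ) (hκ : -1 < κ)
    (lam : Fin b → ℂ) (hinj : Function.Injective lam)
    (hfirst : lam ⟨0, hb⟩ = 1 + (κ : ℂ))
    (hsub : ∀ j : Fin b, j ≠ ⟨0, hb⟩ → (lam j).re < 1 + κ)
    (hind : ∀ j : Fin b,
      ∏ k ∈ Finset.range b, (lam j + (k : ℂ)) = ∏ k ∈ Finset.range b, (1 + (κ : ℂ) + (k : ℂ)))
    (hsum : ∀ j : Fin b, ∑ k ∈ Finset.range b, (lam j + (k : ℂ))⁻¹ ≠ 0)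
    (m : ℕ) (hm1 : 1 ≤ m) (hmb : m ≤ b) :
    Tendsto
      (fun n : ℕ => ∑ j : Fin b,
        genBinomC (lam j + (n : ℂ) - 1) n * genBinomC (lam j + (b : ℂ) - 1) (b - m)
          * genBinomC ((m : ℂ) - 1 + (κ : ℂ)) (m - 1)
          / (genBinomC ((n : ℂ) + (κ : ℂ)) n * genBinomC (b : ℂ) (m - 1)
              * ((b : ℂ) - (m : ℂ) + 1) * genBinomC ((b : ℂ) + (κ : ℂ)) b
              * ∑ k ∈ Finset.range b, (lam j + (k : ℂ))⁻¹))
      atTop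
      (nhds (genBinomC ((b : ℂ) + (κ : ℂ)) (b - m) * genBinomC ((m : ℂ) - 1 + (κ : ℂ)) (m - 1)
        / (genBinomC (b : ℂ) (m - 1) * ((b : ℂ) - (m : ℂ) + 1)
            * genBinomC ((b : ℂ) + (κ : ℂ)) b
            * ∑ k ∈ Finset.range b, ((κ : ℂ) + (k : ℂ) + 1)⁻¹))) := by
  set j0 : Fin b := ⟨0, hb⟩ with hj0
  set c : Fin b → ℂ := fun j =>
    genBinomC (lam j + (b : ℂ) - 1) (b - m) * genBinomC ((m : ℂ) - 1 + (κ : ℂ)) (m - 1)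
      / (genBinomC (b : ℂ) (m - 1) * ((b : ℂ) - (m : ℂ) + 1) * genBinomC ((b : ℂ) + (κ : ℂ)) b
          * ∑ k ∈ Finset.range b, (lam j + (k : ℂ))⁻¹) with hc
  set r : Fin b → ℕ → ℂ := fun j n =>
    (∏ k ∈ Finset.range n, (lam j + k)) / (∏ k ∈ Finset.range n, (1 + (κ : ℂ) + k)) with hr
  have hfac : ∀ n : ℕ, (n.factorial : ℂ) ≠ 0 := fun n => Nat.cast_ne_zero.mpr n.factorial_ne_zero
  have hfun : ∀ (j : Fin b) (n : ℕ),
      genBinomC (lam j + (n : ℂ) - 1) n * genBinomC (lam j + (b : ℂ) - 1) (b - m)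
          * genBinomC ((m : ℂ) - 1 + (κ : ℂ)) (m - 1)
          / (genBinomC ((n : ℂ) + (κ : ℂ)) n * genBinomC (b : ℂ) (m - 1)
              * ((b : ℂ) - (m : ℂ) + 1) * genBinomC ((b : ℂ) + (κ : ℂ)) b
              * ∑ k ∈ Finset.range b, (lam j + (k : ℂ))⁻¹) = r j n * c j := by
    intro j n
    rw [genBinom_shift (lam j) n, genBinom_kappa (κ:ℂ) n]
    have h1 : (∏ k ∈ Finset.range n, (lam j + k)) / (n.factorial : ℂ)
          * genBinomC (lam j + (b : ℂ) - 1) (b - m) * genBinomC ((m : ℂ) - 1 + (κ : ℂ)) (m - 1)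
        = (∏ k ∈ Finset.range n, (lam j + k)) / (n.factorial : ℂ)
          * (genBinomC (lam j + (b : ℂ) - 1) (b - m)
              * genBinomC ((m : ℂ) - 1 + (κ : ℂ)) (m - 1)) := by ring
    have h2 : (∏ k ∈ Finset.range n, (1 + (κ:ℂ) + k)) / (n.factorial : ℂ)
          * genBinomC (b : ℂ) (m - 1) * ((b : ℂ) - (m : ℂ) + 1)
          * genBinomC ((b : ℂ) + (κ : ℂ)) b * ∑ k ∈ Finset.range b, (lam j + (k : ℂ))⁻¹
        = (∏ k ∈ Finset.range n, (1 + (κ:ℂ) + k)) / (n.factorial : ℂ)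
          * (genBinomC (b : ℂ) (m - 1) * ((b : ℂ) - (m : ℂ) + 1)
              * genBinomC ((b : ℂ) + (κ : ℂ)) b
              * ∑ k ∈ Finset.range b, (lam j + (k : ℂ))⁻¹) := by ring
    rw [h1, h2, div_shape _ _ _ _ _ (hfac n)]
  have hμpos : (0:ℝ) < 1 + κ := by linarith
  have hden : ∀ n : ℕ, (∏ k ∈ Finset.range n, (1 + (κ:ℂ) + k)) ≠ 0 := by
    intro n
    refine Finset.prod_ne_zero_iff.mpr fun k _ => ?_
    have h0 : ((1 + κ + k : ℝ) : ℂ) ≠ 0 := by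
      exact_mod_cast (by positivity : (0:ℝ) < 1 + κ + k).ne'
    simpa using h0
  set L : Fin b → ℂ := fun j => if j = j0 then c j0 else 0 with hL
  have main : Tendsto (fun n : ℕ => ∑ j : Fin b, r j n * c j) atTop (𝓝 (∑ j : Fin b, L j)) := by
    refine tendsto_finset_sum _ fun j _ => ?_
    by_cases hj : j = j0
    · have hfj : lam j = 1 + (κ:ℂ) := by rw [hj]; exact hfirst
      have hone : ∀ n : ℕ, r j n = 1 := by
        intro n
        rw [hr]
        simp only
        rw [Finset.prod_congr rfl fun k _ => by rw [hfj], div_self (hden n)]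
      have heq : (fun n : ℕ => r j n * c j) = fun _ : ℕ => c j :=
        funext fun n => by rw [hone n, one_mul]
      rw [heq, hL]
      simp only [if_pos hj]
      rw [hj]
      exact tendsto_const_nhds
    · have hz : Tendsto (r j) atTop (𝓝 0) := by
        have h0 := prod_ratio_tendsto_zero hμpos (z := lam j) (hsub j hj)
        refine h0.congr fun n => ?_
        rw [hr]
        simp only
        congr 1
        exact Finset.prod_congr rfl fun k _ => by push_cast; ring
      have := hz.mul_const (c j)
      rw [zero_mul] at this
      simpa [hL, hj] using this
  have hsumL : ∑ j : Fin b, L j = c j0 := by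
    rw [hL]
    simp
  rw [hsumL] at main
  have hcj0 : c j0 = genBinomC ((b : ℂ) + (κ : ℂ)) (b - m) * genBinomC ((m : ℂ) - 1 + (κ : ℂ)) (m - 1)
        / (genBinomC (b : ℂ) (m - 1) * ((b : ℂ) - (m : ℂ) + 1)
            * genBinomC ((b : ℂ) + (κ : ℂ)) b
            * ∑ k ∈ Finset.range b, ((κ : ℂ) + (k : ℂ) + 1)⁻¹) := by
    rw [hc]
    simp only [hfirst]
    rw [show (1 + (κ:ℂ) + (b:ℂ) - 1) = ((b:ℂ) + (κ:ℂ)) from by ring]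
    congr 2
    exact Finset.sum_congr rfl fun k _ => by rw [show (1 + (κ:ℂ) + (k:ℂ)) = ((κ:ℂ) + k + 1) from by ring]
  rw [hcj0] at main
  exact Tendsto.congr (fun n => by rw [Finset.sum_congr rfl fun j _ => (hfun j n).symm]) main
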